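/- Let d ≥ 1 be an integer and δ > 0. Then the cubic equation √δ·γ³ + (4d+1)·γ² − d² = 0 has exactly one positive solution γ_δ, and the function F(γ) = (8d+2+γ√δ)/(4d) + √( ((8d+2+γ√δ)/(4d))² + √δ/(2γ) ) attains its minimum over γ ∈ (0,∞) exactly at γ = γ_δ, with minimum value F(γ_δ) = d/γ_δ². -/

import Mathlib

open MeasureTheory Real Set
open scoped ENNReal NNReal BigOperators

noncomputable section

namespace Heis

/-- The underlying space `ℝ^d × ℝ^d × ℝ` of the Heisenberg group `ℍ^d`,
with coordinates `(x, y, t)`, `z = (x, y)`. -/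
abbrev P (d : ℕ) := (Fin d → ℝ) × (Fin d → ℝ) × ℝ

variable {d : ℕ}

/-- `|z|²`, the squared Euclidean norm of the horizontal variable `z = (x,y)`. -/
def znormSq (p : P d) : ℝ := (∑ j, p.1 j ^ 2) + (∑ j, p.2.1 j ^ 2)

/-- `|z|`, the Euclidean norm of the horizontal variable. -/
def znorm (p : P d) : ℝ := Real.sqrt (znormSq p)

/-- The Koranyi norm `|(z,t)|_H = (|z|⁴ + t²)^(1/4)`. -/
def koranyi (p : P d) : ℝ := (znormSq p ^ 2 + p.2.2 ^ 2) ^ ((1 : ℝ) / 4)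

/-- Coordinate direction `∂/∂x_j`. -/
def eX (j : Fin d) : P d := (Pi.single j 1, 0, 0)

/-- Coordinate direction `∂/∂y_j`. -/
def eY (j : Fin d) : P d := (0, Pi.single j 1, 0)

/-- Coordinate direction `∂/∂t`. -/
def eT : P d := (0, 0, 1)

variable {E : Type*} [NormedAddCommGroup E] [NormedSpace ℝ E]

/-- The left-invariant vector field `X_j = ∂/∂x_j + 2 y_j ∂/∂t` applied to `u`. -/
def Xd (j : Fin d) (u : P d → E) (p : P d) : E :=
  fderiv ℝ u p (eX j) + (2 * p.2.1 j) • fderiv ℝ u p eT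

/-- The left-invariant vector field `Y_j = ∂/∂y_j − 2 x_j ∂/∂t` applied to `u`. -/
def Yd (j : Fin d) (u : P d → E) (p : P d) : E :=
  fderiv ℝ u p (eY j) - (2 * p.1 j) • fderiv ℝ u p eT

/-- The sublaplacian `L u = −Σ_j (X_j² u + Y_j² u)`. -/
def subL (u : P d → E) (p : P d) : E :=
  - ∑ j, (Xd j (Xd j u) p + Yd j (Yd j u) p)

/-- `|∇_H u|²`, the squared length of the horizontal gradient. -/
def gradHSq (u : P d → E) (p : P d) : ℝ :=
  ∑ j, (‖Xd j u p‖ ^ 2 + ‖Yd j u p‖ ^ 2)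

/-- `|∇_H u|`, the pointwise length of the horizontal gradient. -/
def gradHNorm (u : P d → E) (p : P d) : ℝ := Real.sqrt (gradHSq u p)

/-- The `L²` norm, with values in `[0,∞]`, of a (pointwise absolute value of a) function. -/
def L2 (g : P d → ℝ) : ℝ≥0∞ :=
  (∫⁻ p : P d, ENNReal.ofReal (g p ^ 2)) ^ ((1 : ℝ) / 2)

/-- A function on `ℍ^d` is radial if it only depends on the Koranyi norm. -/
def IsRadial (g : P d → ℂ) : Prop :=
  ∃ g₀ : ℝ → ℂ, ∀ p : P d, g p = g₀ (koranyi p)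

/-- The sign function, with the convention `sgn 0 = 1`. -/
def sgn (w : ℝ) : ℝ := if w = 0 then 1 else w / |w|

/-- The phase `ψ(z,t) = √(d/2) Γ(d/2)/Γ((d+1)/2) sgn(λ₂) √|λ₁| |(z,t)|_H`. -/
def phase (lam : ℂ) (p : P d) : ℝ :=
  Real.sqrt ((d : ℝ) / 2) * (Real.Gamma ((d : ℝ) / 2) / Real.Gamma (((d : ℝ) + 1) / 2)) *
    sgn lam.im * Real.sqrt |lam.re| * koranyi p

/-- The gauge transform `u⁻ = e^{−iψ} u`. -/
def uMinus (lam : ℂ) (u : P d → ℂ) (p : P d) : ℂ :=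
  Complex.exp (-Complex.I * (phase lam p : ℂ)) * u p

/-- The Euler vector field `𝔼 = z·∇_z + 2t ∂_t` applied to `u`. -/
def euler (u : P d → E) (p : P d) : E :=
  fderiv ℝ u p (p.1, p.2.1, 2 * p.2.2)

end Heis

end
/-- The constant function `F(γ)` whose minimum over `γ > 0` is `K_d(δ)`. -/
noncomputable def Kfun (d : ℕ) (δ γ : ℝ) : ℝ :=
  (8 * (d : ℝ) + 2 + γ * Real.sqrt δ) / (4 * d) +
    Real.sqrt (((8 * (d : ℝ) + 2 + γ * Real.sqrt δ) / (4 * d)) ^ 2 + Real.sqrt δ / (2 * γ))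

/-- the cubic `√δ γ³ + (4d+1)γ² − d² = 0` has a unique positive root `γ_δ`,
which is the unique minimizer of `F` on `(0,∞)`, with minimum value `d/γ_δ²`. -/
theorem stmt3 (d : ℕ) (hd : 1 ≤ d) (δ : ℝ) (hδ : 0 < δ) :
    ∃ γδ : ℝ,
      (0 < γδ ∧ Real.sqrt δ * γδ ^ 3 + (4 * (d : ℝ) + 1) * γδ ^ 2 - (d : ℝ) ^ 2 = 0) ∧
      (∀ γ : ℝ, 0 < γ →
        Real.sqrt δ * γ ^ 3 + (4 * (d : ℝ) + 1) * γ ^ 2 - (d : ℝ) ^ 2 = 0 → γ = γδ) ∧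
      Kfun d δ γδ = (d : ℝ) / γδ ^ 2 ∧
      (∀ γ : ℝ, 0 < γ → Kfun d δ γδ ≤ Kfun d δ γ) ∧
      (∀ γ : ℝ, 0 < γ → Kfun d δ γ = Kfun d δ γδ → γ = γδ) := by
  set s := Real.sqrt δ with hs_def
  have hs : 0 < s := Real.sqrt_pos.mpr hδ
  have hD1 : (1:ℝ) ≤ (d:ℝ) := by exact_mod_cast hd
  have hD0 : (0:ℝ) < (d:ℝ) := by linarith
  -- existence of a root in [0, d]
  have hcont : ContinuousOn (fun γ : ℝ => s * γ ^ 3 + (4 * (d:ℝ) + 1) * γ ^ 2 - (d:ℝ) ^ 2)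
      (Set.Icc 0 (d:ℝ)) := by fun_prop
  have hsub := intermediate_value_Icc (le_of_lt hD0) hcont
  have h0mem : (0:ℝ) ∈ Set.Icc
      (s * (0:ℝ) ^ 3 + (4 * (d:ℝ) + 1) * (0:ℝ) ^ 2 - (d:ℝ) ^ 2)
      (s * (d:ℝ) ^ 3 + (4 * (d:ℝ) + 1) * (d:ℝ) ^ 2 - (d:ℝ) ^ 2) := by
    constructor <;> nlinarith [pow_pos hD0 3, pow_pos hD0 2, mul_pos hs (pow_pos hD0 3)]
  obtain ⟨c, hc_mem, hc_root⟩ := hsub h0mem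
  have E : s * c ^ 3 + (4 * (d:ℝ) + 1) * c ^ 2 - (d:ℝ) ^ 2 = 0 := by simpa using hc_root
  have hc_pos : 0 < c := by
    rcases lt_or_eq_of_le hc_mem.1 with h | h
    · exact h
    · exfalso; rw [← h] at E; nlinarith [pow_pos hD0 2]
  have hc0 : c ≠ 0 := ne_of_gt hc_pos
  -- uniqueness of positive root
  have huniq : ∀ γ : ℝ, 0 < γ →
      s * γ ^ 3 + (4 * (d:ℝ) + 1) * γ ^ 2 - (d:ℝ) ^ 2 = 0 → γ = c := by
    intro γ hγ hroot
    rcases lt_trichotomy γ c with h | h | h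
    · exfalso
      nlinarith [pow_lt_pow_left₀ h hγ.le two_ne_zero, pow_lt_pow_left₀ h hγ.le three_ne_zero,
        mul_pos hs (sub_pos.mpr (pow_lt_pow_left₀ h hγ.le three_ne_zero))]
    · exact h
    · exfalso
      nlinarith [pow_lt_pow_left₀ h hc_pos.le two_ne_zero, pow_lt_pow_left₀ h hc_pos.le three_ne_zero,
        mul_pos hs (sub_pos.mpr (pow_lt_pow_left₀ h hc_pos.le three_ne_zero))]
  set K : ℝ := (d:ℝ) / c ^ 2 with hK_def
  have hK_pos : 0 < K := by positivity
  -- key identity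
  have key : ∀ γ : ℝ, 0 < γ →
      K ^ 2 - 2 * ((8 * (d:ℝ) + 2 + γ * s) / (4 * d)) * K - s / (2 * γ)
        = -(s * (γ - c) ^ 2) / (2 * γ * c ^ 2) := by
    intro γ hγ
    have hγ0 : γ ≠ 0 := ne_of_gt hγ
    have hd0 : (d:ℝ) ≠ 0 := ne_of_gt hD0
    rw [hK_def]
    field_simp
    linear_combination (-(8:ℝ) * γ) * E
  set A : ℝ → ℝ := fun γ => (8 * (d:ℝ) + 2 + γ * s) / (4 * d) with hA_def
  have hA_pos : ∀ γ : ℝ, 0 < γ → 0 < A γ := by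
    intro γ hγ
    have : 0 < 8 * (d:ℝ) + 2 + γ * s := by positivity
    positivity
  have hKfun : ∀ γ : ℝ, Kfun d δ γ = A γ + Real.sqrt ((A γ) ^ 2 + s / (2 * γ)) := by
    intro γ; rfl
  -- at the root
  have hQc : K ^ 2 - 2 * A c * K - s / (2 * c) = 0 := by
    have h := key c hc_pos
    simpa using h
  have hBc : 0 < s / (2 * c) := by positivity
  have hKA : A c < K := by nlinarith [mul_pos hK_pos (hA_pos c hc_pos)]
  have hsqc : (A c) ^ 2 + s / (2 * c) = (K - A c) ^ 2 := by linear_combination -hQc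
  have hKc : Kfun d δ c = K := by
    rw [hKfun c, hsqc, Real.sqrt_sq (by linarith)]
    ring
  -- strict minimality away from c
  have hstrict : ∀ γ : ℝ, 0 < γ → γ ≠ c → K < Kfun d δ γ := by
    intro γ hγ hne
    have hQγ : K ^ 2 - 2 * A γ * K - s / (2 * γ) < 0 := by
      rw [key γ hγ]
      have h1 : 0 < s * (γ - c) ^ 2 := by
        have : γ - c ≠ 0 := sub_ne_zero.mpr hne
        positivity
      have h2 : 0 < 2 * γ * c ^ 2 := by positivity
      exact div_neg_of_neg_of_pos (neg_neg_iff_pos.mpr h1) h2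
    rw [hKfun γ]
    rcases le_or_gt K (A γ) with h | h
    · have : 0 < Real.sqrt ((A γ) ^ 2 + s / (2 * γ)) := Real.sqrt_pos.mpr (by positivity)
      linarith
    · have h2 : (K - A γ) ^ 2 < (A γ) ^ 2 + s / (2 * γ) := by nlinarith [hQγ]
      have h3 : K - A γ < Real.sqrt ((A γ) ^ 2 + s / (2 * γ)) :=
        (Real.lt_sqrt (by linarith : (0:ℝ) ≤ K - A γ)).mpr h2
      linarith
  refine ⟨c, ⟨hc_pos, E⟩, huniq, by rw [hKc], ?_, ?_⟩
  · intro γ hγ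
    by_cases hne : γ = c
    · rw [hne]
    · rw [hKc]; exact (hstrict γ hγ hne).le
  · intro γ hγ heq
    by_contra hne
    have := hstrict γ hγ hne
    rw [heq, hKc] at this
    exact lt_irrefl K this
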